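/- If y is obtained from x by a tandem duplication of length k (inserting an exact copy of a length-k substring of x immediately after its original position), then φ_k(y) is obtained from φ_k(x) by inserting a block of k zeros at the corresponding position. -/

import Mathlib

/-- The map `φ_k` on strings (lists) over `ℤ_q`: the `i`-th symbol (0-based) of the
output is `x_i - x_{i-k}`, with the convention that out-of-range symbols are `0`. -/
def phiL (q k : ℕ) (x : List (ZMod q)) : List (ZMod q) :=
  (List.range x.length).map fun i =>
    x.getD i 0 - (if k ≤ i then x.getD (i - k) 0 else 0)

lemma getD_take' {α} (l : List α) (i n : ℕ) (d : α) (h : i < n) :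
    (l.take n).getD i d = l.getD i d := by
  simp [List.getD_eq_getElem?_getD, List.getElem?_take, h]

lemma getD_drop' {α} (l : List α) (i n : ℕ) (d : α) :
    (l.drop n).getD i d = l.getD (n + i) d := by
  simp [List.getD_eq_getElem?_getD, List.getElem?_drop]

lemma getD_phiL (q k : ℕ) (x : List (ZMod q)) (i : ℕ) (h : i < x.length) :
    (phiL q k x).getD i 0 = x.getD i 0 - (if k ≤ i then x.getD (i - k) 0 else 0) := by
  rw [phiL, List.getD_eq_getElem?_getD, List.getElem?_map, List.getElem?_range h]
  rfl

/-- if `y` is obtained from `x` by a tandem duplication of length `k`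
at position `j` (i.e. `y = x_1 … x_j x_{j-k+1} … x_j x_{j+1} … x_n`), then
`φ_k(y)` is obtained from `φ_k(x)` by inserting a block of `k` zeros at position `j`. -/
theorem stmt1 (q k : ℕ) (hq : 2 ≤ q) (hk : 1 ≤ k)
    (x : List (ZMod q)) (j : ℕ) (hjk : k ≤ j) (hj : j ≤ x.length) :
    phiL q k (x.take j ++ (x.drop (j - k)).take k ++ x.drop j)
      = (phiL q k x).take j ++ List.replicate k (0 : ZMod q) ++ (phiL q k x).drop j := by
  set n := x.length with hn
  set y := x.take j ++ (x.drop (j - k)).take k ++ x.drop j with hy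
  have hmidlen : ((x.drop (j - k)).take k).length = k := by
    simp; omega
  have hab : (x.take j ++ (x.drop (j - k)).take k).length = j + k := by
    rw [List.length_append, List.length_take, hmidlen]; omega
  have hylen : y.length = n + k := by
    rw [hy, List.length_append, hab, List.length_drop]; omega
  have hA : ∀ i, y.getD i 0 = if i < j then x.getD i 0 else x.getD (i - k) 0 := by
    intro i
    rw [hy]
    by_cases h1 : i < j
    · rw [List.getD_append _ _ _ _ (by rw [hab]; omega),
        List.getD_append _ _ _ _ (by rw [List.length_take]; omega),
        getD_take' _ _ _ _ h1, if_pos h1]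
    · rw [if_neg h1]
      by_cases h2 : i < j + k
      · rw [List.getD_append _ _ _ _ (by rw [hab]; omega),
          List.getD_append_right _ _ _ _ (by rw [List.length_take]; omega)]
        have ht : (x.take j).length = j := by rw [List.length_take]; omega
        rw [ht, getD_take' _ _ _ _ (by omega), getD_drop']
        congr 1; omega
      · rw [List.getD_append_right _ _ _ _ (by rw [hab]; omega), hab, getD_drop']
        congr 1; omega
  have hphix : (phiL q k x).length = n := by simp [phiL, hn]
  have hphiy : (phiL q k y).length = n + k := by simp [phiL, hylen]
  have htakelen : ((phiL q k x).take j).length = j := by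
    rw [List.length_take, hphix]; omega
  have habr : ((phiL q k x).take j ++ List.replicate k (0 : ZMod q)).length = j + k := by
    rw [List.length_append, htakelen, List.length_replicate]
  have hlen : (phiL q k y).length
      = ((phiL q k x).take j ++ List.replicate k (0 : ZMod q) ++ (phiL q k x).drop j).length := by
    rw [hphiy, List.length_append, habr, List.length_drop, hphix]; omega
  apply List.ext_getElem hlen
  intro i h1 h2
  rw [← List.getD_eq_getElem _ 0, ← List.getD_eq_getElem _ 0]
  rw [hphiy] at h1
  rw [getD_phiL q k y i (by omega), hA i]
  by_cases hki : k ≤ i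
  · rw [if_pos hki, hA (i - k)]
    by_cases hij : i < j
    · rw [if_pos hij, if_pos (show i - k < j by omega),
        List.getD_append _ _ _ _ (by rw [habr]; omega),
        List.getD_append _ _ _ _ (by rw [htakelen]; omega),
        getD_take' _ _ _ _ hij, getD_phiL q k x i (by omega), if_pos hki]
    · rw [if_neg hij]
      by_cases h2' : i < j + k
      · rw [if_pos (show i - k < j by omega), sub_self,
          List.getD_append _ _ _ _ (by rw [habr]; omega),
          List.getD_append_right _ _ _ _ (by rw [htakelen]; omega), htakelen]
        simp [List.getD_eq_getElem?_getD, List.getElem?_replicate, show i - j < k by omega]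
      · rw [if_neg (show ¬ i - k < j by omega),
          List.getD_append_right _ _ _ _ (by rw [habr]; omega), habr, getD_drop',
          show j + (i - (j + k)) = i - k by omega,
          getD_phiL q k x (i - k) (by omega), if_pos (show k ≤ i - k by omega)]
  · rw [if_neg hki, if_pos (show i < j by omega), sub_zero,
      List.getD_append _ _ _ _ (by rw [habr]; omega),
      List.getD_append _ _ _ _ (by rw [htakelen]; omega),
      getD_take' _ _ _ _ (by omega), getD_phiL q k x i (by omega), if_neg hki, sub_zero]
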